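/- arXiv:1607.02349 — 3 statements merged into one kernel-verified Lean document; each statement's English description precedes it below -/
import Mathlib

section
/- Let $z_{\min} < z_{\max}$, $\mu, \gamma$ nonnegative bounded on $[z_{\min}, z_{\max}]$, $M$ an antiderivative of $\mu$, $\alpha>0$, and $\beta = \int_{z_{\min}}^{z_{\max}} \int_{z_{\min}}^{z} \gamma(y) e^{-(M(z)-M(y))} dy\, dz$. If $\beta > 1$, then the function $\rho_{eq}(z) = \frac{P_{eq}}{1+\alpha P_{eq}^2} \int_{z_{\min}}^{z} \gamma(y) e^{-(M(z)-M(y))} dy$ with $P_{eq} = \sqrt{(\beta-1)/\alpha}$ satisfies: (i) $\rho_{eq}'(z) = -\mu(z)\rho_{eq}(z) + \frac{P_{eq}}{1+\alpha P_{eq}^2}\gamma(z)$ for a.e. $z$, (ii) $\rho_{eq}(z_{\min}) = 0$, and (iii) $\int_{z_{\min}}^{z_{\max}} \rho_{eq}(z)\,dz = P_{eq}$. -/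
open MeasureTheory Real Set Filter Metric

open scoped Topology Interval

/-- Almost-everywhere fundamental theorem of calculus for an integrable function,
via the Lebesgue differentiation theorem. -/
lemma ae_ftc (a : ℝ) (g : ℝ → ℝ) (hg : Integrable g) :
    ∀ᵐ x : ℝ, HasDerivAt (fun u => ∫ t in a..u, g t) (g x) x := by
  filter_upwards [IsUnifLocDoublingMeasure.ae_tendsto_average_norm_sub
    (μ := (volume : Measure ℝ)) hg.locallyIntegrable 1] with x hx
  have hdelta : Tendsto (fun u : ℝ => |u - x|) (𝓝[≠] x) (𝓝[>] (0 : ℝ)) := by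
    apply tendsto_nhdsWithin_of_tendsto_nhds_of_eventually_within
    · have h1 : Tendsto (fun u : ℝ => |u - x|) (𝓝 x) (𝓝 |x - x|) :=
        ((continuous_id.sub continuous_const).abs).tendsto x
      simpa using h1.mono_left nhdsWithin_le_nhds
    · filter_upwards [self_mem_nhdsWithin] with u hu
      exact abs_pos.2 (sub_ne_zero.2 hu)
  have key : Tendsto (fun u => ⨍ y in closedBall x |u - x|, ‖g y - g x‖) (𝓝[≠] x) (𝓝 0) := by
    refine hx (fun _ => x) (fun u => |u - x|) hdelta ?_
    filter_upwards with u
    simp [Metric.mem_closedBall, abs_nonneg]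
  rw [hasDerivAt_iff_tendsto_slope, tendsto_iff_norm_sub_tendsto_zero]
  have hbound : ∀ᶠ u in 𝓝[≠] x,
      ‖slope (fun u => ∫ t in a..u, g t) x u - g x‖ ≤
        2 * ⨍ y in closedBall x |u - x|, ‖g y - g x‖ := by
    filter_upwards [self_mem_nhdsWithin] with u hu
    have hux : u - x ≠ 0 := sub_ne_zero.2 hu
    have huxpos : 0 < |u - x| := abs_pos.2 hux
    have h1 : (∫ t in a..u, g t) - (∫ t in a..x, g t) = ∫ t in x..u, g t :=
      intervalIntegral.integral_interval_sub_left hg.intervalIntegrable hg.intervalIntegrable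
    have h2 : slope (fun u => ∫ t in a..u, g t) x u - g x
        = (∫ t in x..u, (g t - g x)) / (u - x) := by
      rw [slope_def_field, h1,
        intervalIntegral.integral_sub hg.intervalIntegrable (intervalIntegrable_const),
        intervalIntegral.integral_const, smul_eq_mul]
      field_simp
    have hsub : Ι x u ⊆ closedBall x |u - x| := by
      intro y hy
      rw [Set.mem_uIoc] at hy
      rw [mem_closedBall, Real.dist_eq, abs_le]
      have hb1 : u - x ≤ |u - x| := le_abs_self _
      have hb2 : -|u - x| ≤ u - x := neg_abs_le _
      rcases hy with ⟨h3, h4⟩ | ⟨h3, h4⟩ <;> constructor <;> linarith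
    have hint : IntegrableOn (fun y => ‖g y - g x‖) (closedBall x |u - x|) volume :=
      (hg.integrableOn.sub (integrableOn_const measure_closedBall_lt_top.ne)).norm
    have hmono : (∫ y in Ι x u, ‖g y - g x‖) ≤ ∫ y in closedBall x |u - x|, ‖g y - g x‖ :=
      setIntegral_mono_set hint (Filter.Eventually.of_forall fun y => norm_nonneg _)
        (HasSubset.Subset.eventuallyLE hsub)
    have hnum : ‖∫ t in x..u, (g t - g x)‖ ≤ ∫ y in Ι x u, ‖g y - g x‖ :=
      intervalIntegral.norm_integral_le_integral_norm_uIoc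
    have hvol : (volume (closedBall x |u - x|)).toReal = 2 * |u - x| := by
      rw [Real.volume_closedBall, ENNReal.toReal_ofReal (by positivity)]
    have havg : (2 : ℝ) * ⨍ y in closedBall x |u - x|, ‖g y - g x‖
        = (∫ y in closedBall x |u - x|, ‖g y - g x‖) / |u - x| := by
      rw [setAverage_eq, measureReal_def, hvol]
      rw [smul_eq_mul, div_eq_inv_mul, ← mul_assoc]; congr 1
      field_simp
    rw [h2, havg]
    calc ‖(∫ t in x..u, (g t - g x)) / (u - x)‖
        = ‖∫ t in x..u, (g t - g x)‖ / |u - x| := by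
          rw [norm_div, Real.norm_eq_abs (u - x)]
      _ ≤ (∫ y in Ι x u, ‖g y - g x‖) / |u - x| := by gcongr
      _ ≤ (∫ y in closedBall x |u - x|, ‖g y - g x‖) / |u - x| := by gcongr
  refine squeeze_zero' (Filter.Eventually.of_forall fun u => norm_nonneg _) hbound ?_
  have h0 := key.const_mul (2 : ℝ)
  simpa using h0

theorem stmt1 (zmin zmax : ℝ) (hz : zmin < zmax)
    (μ γ M : ℝ → ℝ) (hμmeas : Measurable μ) (hγmeas : Measurable γ)
    (hμ0 : ∀ z ∈ Icc zmin zmax, 0 ≤ μ z) (hγ0 : ∀ z ∈ Icc zmin zmax, 0 ≤ γ z)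
    (hμb : ∃ Cμ, ∀ z ∈ Icc zmin zmax, μ z ≤ Cμ)
    (hγb : ∃ Cγ, ∀ z ∈ Icc zmin zmax, γ z ≤ Cγ)
    (hM : ∀ z, HasDerivAt M (μ z) z)
    (α : ℝ) (hα : 0 < α)
    (β : ℝ)
    (hβ : β = ∫ z in zmin..zmax, ∫ y in zmin..z, γ y * Real.exp (-(M z - M y)))
    (hβgt : 1 < β)
    (Peq : ℝ) (hPeq : Peq = Real.sqrt ((β - 1) / α))
    (ρeq : ℝ → ℝ)
    (hρeq : ∀ z, ρeq z =
      Peq / (1 + α * Peq ^ 2) * ∫ y in zmin..z, γ y * Real.exp (-(M z - M y))) :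
    (∀ᵐ z ∂(volume.restrict (Icc zmin zmax)),
        HasDerivAt ρeq (-μ z * ρeq z + Peq / (1 + α * Peq ^ 2) * γ z) z) ∧
    ρeq zmin = 0 ∧
    (∫ z in zmin..zmax, ρeq z) = Peq := by
  obtain ⟨Cγ, hCγ⟩ := hγb
  have hMcont : Continuous M := by
    rw [continuous_iff_continuousAt]
    exact fun z => (hM z).continuousAt
  set c : ℝ := Peq / (1 + α * Peq ^ 2) with hc
  have hβ1 : (0 : ℝ) ≤ (β - 1) / α := div_nonneg (by linarith) hα.le
  have hPsq : Peq ^ 2 = (β - 1) / α := by rw [hPeq, sq_sqrt hβ1]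
  have hden : 1 + α * Peq ^ 2 = β := by
    rw [hPsq]; field_simp; ring
  have hβne : β ≠ 0 := by linarith
  set g : ℝ → ℝ := (Icc zmin zmax).indicator (fun y => γ y * Real.exp (M y)) with hgdef
  have hCγ0 : 0 ≤ Cγ := le_trans (hγ0 zmin ⟨le_refl _, hz.le⟩) (hCγ zmin ⟨le_refl _, hz.le⟩)
  obtain ⟨zM, hzMmem, hzM⟩ :=
    isCompact_Icc.exists_isMaxOn (Set.nonempty_Icc.2 hz.le) hMcont.continuousOn
  have hgint : Integrable g := by
    rw [hgdef, integrable_indicator_iff measurableSet_Icc]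
    apply Measure.integrableOn_of_bounded (M := Cγ * Real.exp (M zM))
      measure_Icc_lt_top.ne
      ((hγmeas.mul hMcont.measurable.exp).aestronglyMeasurable)
    filter_upwards [ae_restrict_mem measurableSet_Icc] with y hy
    simp only [Pi.mul_apply]
    rw [Real.norm_eq_abs, abs_of_nonneg (mul_nonneg (hγ0 y hy) (Real.exp_pos _).le)]
    exact mul_le_mul (hCγ y hy) (Real.exp_le_exp.2 (hzM hy)) (Real.exp_pos _).le hCγ0
  -- key rewriting of ρeq
  have hrw : ∀ u ∈ Icc zmin zmax,
      ρeq u = c * (Real.exp (-M u) * ∫ t in zmin..u, g t) := by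
    intro u hu
    rw [hρeq u]
    congr 1
    rw [← intervalIntegral.integral_const_mul]
    apply intervalIntegral.integral_congr
    intro y hy
    rw [Set.uIcc_of_le hu.1] at hy
    have hy' : y ∈ Icc zmin zmax := ⟨hy.1, le_trans hy.2 hu.2⟩
    simp only [hgdef, Set.indicator_of_mem hy']
    rw [show -(M u - M y) = M y + -(M u) by ring, Real.exp_add]
    ring
  refine ⟨?_, ?_, ?_⟩
  · -- a.e. derivative
    have h1 : ∀ᵐ z : ℝ, HasDerivAt (fun u => ∫ t in zmin..u, g t) (g z) z :=
      ae_ftc zmin g hgint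
    have h2 : ∀ᵐ z : ℝ, z ∉ ({zmin, zmax} : Set ℝ) :=
      measure_eq_zero_iff_ae_notMem.1 (Set.Countable.measure_zero ((Set.countable_singleton zmax).insert zmin) volume)
    filter_upwards [ae_restrict_of_ae h1, ae_restrict_of_ae h2,
      ae_restrict_mem measurableSet_Icc] with z hz1 hz2 hzmem
    simp only [Set.mem_insert_iff, Set.mem_singleton_iff, not_or] at hz2
    have hzo : z ∈ Ioo zmin zmax :=
      ⟨lt_of_le_of_ne hzmem.1 (Ne.symm hz2.1), lt_of_le_of_ne hzmem.2 hz2.2⟩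
    have heq : ρeq =ᶠ[𝓝 z] fun u => c * (Real.exp (-M u) * ∫ t in zmin..u, g t) := by
      filter_upwards [Ioo_mem_nhds hzo.1 hzo.2] with u hu
      exact hrw u (Ioo_subset_Icc_self hu)
    have hMd : HasDerivAt (fun u => Real.exp (-M u)) (Real.exp (-M z) * -μ z) z :=
      ((hM z).neg).exp
    have hprod : HasDerivAt (fun u => Real.exp (-M u) * ∫ t in zmin..u, g t)
        (Real.exp (-M z) * -μ z * (∫ t in zmin..z, g t) + Real.exp (-M z) * g z) z :=
      hMd.mul hz1
    have hder := (hprod.const_mul c).congr_of_eventuallyEq heq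
    refine hder.congr_deriv ?_
    rw [hrw z hzmem]
    simp only [hgdef, Set.indicator_of_mem hzmem]
    rw [Real.exp_neg]
    field_simp
  · -- boundary value
    rw [hρeq zmin]; simp
  · -- total mass
    have hstep : (∫ z in zmin..zmax, ρeq z)
        = c * ∫ z in zmin..zmax, ∫ y in zmin..z, γ y * Real.exp (-(M z - M y)) := by
      rw [← intervalIntegral.integral_const_mul]
      apply intervalIntegral.integral_congr
      intro z _
      rw [hρeq z]
    rw [hstep, ← hβ, hc, hden, div_mul_cancel₀ _ hβne]
end

section
/- Let $\mu, \gamma \in C([z_{\min},z_{\max}])$ be nonnegative, $M' = \mu$, and $\omega \in C^1([z_{\min},z_{\max}])$ nonnegative. Then the balance identity holds: $\int_{z_{\min}}^{z_{\max}} \omega(z)\gamma(z)\,dz = \int_{z_{\min}}^{z_{\max}} \Big[ (\omega(z)\mu(z) - \omega'(z)) \int_{z_{\min}}^{z} \gamma(y) e^{-(M(z)-M(y))} dy + \omega(z_{\max})\gamma(z) e^{-(M(z_{\max})-M(z))} \Big] dz$. -/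
open MeasureTheory Real Set

theorem stmt7 (zmin zmax : ℝ) (hz : zmin < zmax)
    (μ γ M ω ω' : ℝ → ℝ)
    (hμc : ContinuousOn μ (Icc zmin zmax)) (hγc : ContinuousOn γ (Icc zmin zmax))
    (hμ0 : ∀ z ∈ Icc zmin zmax, 0 ≤ μ z) (hγ0 : ∀ z ∈ Icc zmin zmax, 0 ≤ γ z)
    (hM : ∀ z, HasDerivAt M (μ z) z)
    (hω : ∀ z, HasDerivAt ω (ω' z) z) (hω'c : Continuous ω')
    (hω0 : ∀ z ∈ Icc zmin zmax, 0 ≤ ω z) :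
    ∫ z in zmin..zmax, ω z * γ z =
      ∫ z in zmin..zmax,
        ((ω z * μ z - ω' z) * ∫ y in zmin..z, γ y * Real.exp (-(M z - M y)))
          + ω zmax * γ z * Real.exp (-(M zmax - M z)) := by
  have hle := hz.le
  set g : ℝ → ℝ := IccExtend hle ((Icc zmin zmax).restrict γ) with hgdef
  have hgc : Continuous g := Continuous.Icc_extend' (continuousOn_iff_continuous_restrict.mp hγc)
  have hgeq : ∀ z ∈ Icc zmin zmax, g z = γ z := by
    intro z hzI
    simp [hgdef, IccExtend_of_mem hle _ hzI]
    rfl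
  have hMc : Continuous M := continuous_iff_continuousAt.mpr fun z => (hM z).continuousAt
  have hωc : Continuous ω := continuous_iff_continuousAt.mpr fun z => (hω z).continuousAt
  set E : ℝ → ℝ := fun y => g y * Real.exp (M y) with hEdef
  have hEc : Continuous E := hgc.mul (Real.continuous_exp.comp hMc)
  set F : ℝ → ℝ := fun z => ∫ y in zmin..z, E y with hFdef
  have hF : ∀ z, HasDerivAt F (E z) z := fun z =>
    intervalIntegral.integral_hasDerivAt_right (hEc.intervalIntegrable _ _)
      (hEc.stronglyMeasurableAtFilter _ _) hEc.continuousAt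
  set ρ : ℝ → ℝ := fun z => Real.exp (-(M z)) * F z with hρdef
  have hexp1 : ∀ z, Real.exp (-(M z)) * Real.exp (M z) = 1 := by
    intro z; rw [← Real.exp_add]; simp
  have hρd : ∀ z, HasDerivAt ρ (g z - μ z * ρ z) z := by
    intro z
    have h1 : HasDerivAt (fun w => Real.exp (-(M w))) (Real.exp (-(M z)) * -(μ z)) z :=
      (hM z).neg.exp
    have h2 : HasDerivAt (fun w => Real.exp (-(M w)) * F w) _ z := h1.mul (hF z)
    convert h2 using 1
    simp only [hρdef, hEdef]
    have := hexp1 z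
    linear_combination (-(g z)) * this
  have hρc : Continuous ρ := continuous_iff_continuousAt.mpr fun z => (hρd z).continuousAt
  have hρ0 : ρ zmin = 0 := by simp [hρdef, hFdef]
  set D : ℝ → ℝ := fun z => ω' z * ρ z + ω z * (g z - μ z * ρ z) with hDdef
  have hGd : ∀ z, HasDerivAt (fun z => ω z * ρ z) (D z) z := fun z => (hω z).mul (hρd z)
  have hIcc : uIcc zmin zmax = Icc zmin zmax := uIcc_of_le hle
  have hDc : ContinuousOn D (uIcc zmin zmax) := by
    rw [hIcc]
    exact (hω'c.continuousOn.mul hρc.continuousOn).add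
      (hωc.continuousOn.mul (hgc.continuousOn.sub (hμc.mul hρc.continuousOn)))
  have hFTC : ∫ z in zmin..zmax, D z = ω zmax * ρ zmax := by
    rw [intervalIntegral.integral_eq_sub_of_hasDerivAt (fun z _ => hGd z)
      (hDc.intervalIntegrable), hρ0, mul_zero, sub_zero]
  set B : ℝ → ℝ := fun z => (ω z * μ z - ω' z) * ρ z with hBdef
  have hBc : ContinuousOn B (uIcc zmin zmax) := by
    rw [hIcc]
    exact ((hωc.continuousOn.mul hμc).sub hω'c.continuousOn).mul hρc.continuousOn
  -- ρ̂ = ρ on Icc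
  have hρhat : ∀ z ∈ Icc zmin zmax,
      (∫ y in zmin..z, γ y * Real.exp (-(M z - M y))) = ρ z := by
    intro z hzI
    have h1 : ∀ y ∈ uIcc zmin z, γ y * Real.exp (-(M z - M y))
        = Real.exp (-(M z)) * (g y * Real.exp (M y)) := by
      intro y hy
      rw [uIcc_of_le hzI.1] at hy
      have hyI : y ∈ Icc zmin zmax := ⟨hy.1, hy.2.trans hzI.2⟩
      rw [hgeq y hyI, show -(M z - M y) = -(M z) + M y by ring, Real.exp_add]
      ring
    rw [intervalIntegral.integral_congr h1, intervalIntegral.integral_const_mul]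
  -- LHS
  have hLHS : ∫ z in zmin..zmax, ω z * γ z = ω zmax * ρ zmax + ∫ z in zmin..zmax, B z := by
    have h1 : ∀ z ∈ uIcc zmin zmax, ω z * γ z = D z + B z := by
      intro z hzI
      rw [hIcc] at hzI
      rw [← hgeq z hzI]
      simp only [hDdef, hBdef]; ring
    rw [intervalIntegral.integral_congr h1,
      intervalIntegral.integral_add (hDc.intervalIntegrable) (hBc.intervalIntegrable), hFTC]
  -- RHS
  have hC : (∫ z in zmin..zmax, ω zmax * γ z * Real.exp (-(M zmax - M z)))
      = ω zmax * ρ zmax := by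
    have h1 : ∀ z ∈ uIcc zmin zmax, ω zmax * γ z * Real.exp (-(M zmax - M z))
        = (ω zmax * Real.exp (-(M zmax))) * (g z * Real.exp (M z)) := by
      intro z hzI
      rw [hIcc] at hzI
      rw [hgeq z hzI, show -(M zmax - M z) = -(M zmax) + M z by ring, Real.exp_add]
      ring
    rw [intervalIntegral.integral_congr h1, intervalIntegral.integral_const_mul]
    simp only [hρdef]; ring
  have hCc : ContinuousOn (fun z => ω zmax * γ z * Real.exp (-(M zmax - M z)))
      (uIcc zmin zmax) := by
    rw [hIcc]
    exact (continuousOn_const.mul hγc).mul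
      (Real.continuous_exp.comp ((continuous_const.sub hMc).neg)).continuousOn
  have hRHS : (∫ z in zmin..zmax,
        ((ω z * μ z - ω' z) * ∫ y in zmin..z, γ y * Real.exp (-(M z - M y)))
          + ω zmax * γ z * Real.exp (-(M zmax - M z)))
      = (∫ z in zmin..zmax, B z) + ω zmax * ρ zmax := by
    have h1 : ∀ z ∈ uIcc zmin zmax,
        ((ω z * μ z - ω' z) * ∫ y in zmin..z, γ y * Real.exp (-(M z - M y)))
          + ω zmax * γ z * Real.exp (-(M zmax - M z))
        = B z + ω zmax * γ z * Real.exp (-(M zmax - M z)) := by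
      intro z hzI
      rw [hIcc] at hzI
      rw [hρhat z hzI]
    rw [intervalIntegral.integral_congr h1,
      intervalIntegral.integral_add (hBc.intervalIntegrable) (hCc.intervalIntegrable), hC]
  rw [hLHS, hRHS]; ring
end

section
/- Let $\mu, \gamma$ be continuous nonnegative functions on $[z_{\min},z_{\max}]$ with $M' = \mu$. The set of nonnegative stationary states of the budget-constrained model, i.e. nonnegative $C^1$ functions $\rho$ on $[z_{\min},z_{\max}]$ with $\rho(z_{\min}) = 0$ satisfying $\rho'(z) = -\mu(z)\rho(z) + h^*\gamma(z)$ for some constant $h^* \ge 0$ given by the budget formula $h^* = \frac{\int_{z_{\min}}^{z_{\max}}\omega\mu\rho\,dz + \omega(z_{\max})\rho(z_{\max}) - \int_{z_{\min}}^{z_{\max}}\rho\,\omega'\,dz}{\int_{z_{\min}}^{z_{\max}}\omega\gamma\,dz}$, equals exactly $\{ z \mapsto C\int_{z_{\min}}^{z}\gamma(y)e^{-(M(z)-M(y))}dy : C \ge 0\}$. -/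
open MeasureTheory Real Set

theorem stmt8 (zmin zmax : ℝ) (hz : zmin < zmax)
    (μ γ M ω ω' : ℝ → ℝ)
    (hμc : ContinuousOn μ (Icc zmin zmax)) (hγc : ContinuousOn γ (Icc zmin zmax))
    (hμ0 : ∀ z ∈ Icc zmin zmax, 0 ≤ μ z) (hγ0 : ∀ z ∈ Icc zmin zmax, 0 ≤ γ z)
    (hM : ∀ z, HasDerivAt M (μ z) z)
    (hω : ∀ z, HasDerivAt ω (ω' z) z) (hω'c : Continuous ω')
    (hω0 : ∀ z ∈ Icc zmin zmax, 0 < ω z)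
    (hωγ : 0 < ∫ z in zmin..zmax, ω z * γ z) :
    {ρ : ℝ → ℝ |
        (∀ z ∈ Icc zmin zmax, 0 ≤ ρ z) ∧ ρ zmin = 0 ∧
        ∃ hstar : ℝ, 0 ≤ hstar ∧
          hstar = ((∫ z in zmin..zmax, ω z * μ z * ρ z) + ω zmax * ρ zmax
              - ∫ z in zmin..zmax, ρ z * ω' z) / ∫ z in zmin..zmax, ω z * γ z ∧
          ∀ z ∈ Icc zmin zmax,
            HasDerivWithinAt ρ (-μ z * ρ z + hstar * γ z) (Icc zmin zmax) z}
    = {ρ : ℝ → ℝ | ∃ C : ℝ, 0 ≤ C ∧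
        Set.EqOn ρ (fun z => C * ∫ y in zmin..z, γ y * Real.exp (-(M z - M y)))
          (Icc zmin zmax)} := by
  have hle : zmin ≤ zmax := hz.le
  -- continuous extension of γ
  set c : ℝ → ℝ := fun z => min zmax (max zmin z) with hc
  have hcmem : ∀ z, c z ∈ Icc zmin zmax := fun z =>
    ⟨le_min hle (le_max_left _ _), min_le_left _ _⟩
  have hceq : ∀ z ∈ Icc zmin zmax, c z = z := by
    intro z hzm
    simp only [hc, max_eq_right hzm.1, min_eq_right hzm.2]
  set γt : ℝ → ℝ := fun z => γ (c z) with hγt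
  have hγtc : Continuous γt :=
    hγc.comp_continuous (by fun_prop) hcmem
  have hγteq : ∀ z ∈ Icc zmin zmax, γt z = γ z := by
    intro z hzm
    simp only [hγt, hceq z hzm]
  have hγt0 : ∀ z, 0 ≤ γt z := fun z => hγ0 _ (hcmem z)
  -- exponential of M
  set e : ℝ → ℝ := fun z => Real.exp (M z) with he
  have heD : ∀ z, HasDerivAt e (μ z * e z) z := by
    intro z
    simpa [he, mul_comm] using (hM z).exp
  have hec : Continuous e :=
    Real.continuous_exp.comp (continuous_iff_continuousAt.2 fun z => (hM z).continuousAt)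
  have hee : ∀ z, Real.exp (-M z) * e z = 1 := by
    intro z; simp [he, ← Real.exp_add]
  set g : ℝ → ℝ := fun z => γt z * e z with hg
  have hgc : Continuous g := hγtc.mul hec
  have hg0 : ∀ z, 0 ≤ g z := fun z => mul_nonneg (hγt0 z) (Real.exp_nonneg _)
  set F : ℝ → ℝ := fun z => ∫ y in zmin..z, g y with hF
  have hFD : ∀ z, HasDerivAt F (g z) z := fun z =>
    (hgc.integral_hasStrictDerivAt zmin z).hasDerivAt
  have hFc : Continuous F :=
    continuous_iff_continuousAt.2 fun z => (hFD z).continuousAt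
  have hFmin : F zmin = 0 := by simp [hF]
  set ρ₀ : ℝ → ℝ := fun z => Real.exp (-M z) * F z with hρ₀
  have hρ₀D : ∀ z, HasDerivAt ρ₀ (-μ z * ρ₀ z + γt z) z := by
    intro z
    have h1 : HasDerivAt (fun z => Real.exp (-M z)) (Real.exp (-M z) * (-μ z)) z :=
      ((hM z).neg).exp
    have h2 := h1.mul (hFD z)
    refine h2.congr_deriv ?_
    symm
    have := hee z
    simp only [hρ₀, hg]
    linear_combination (-γt z) * this
  have hρ₀c : Continuous ρ₀ :=
    continuous_iff_continuousAt.2 fun z => (hρ₀D z).continuousAt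
  have hρ₀min : ρ₀ zmin = 0 := by simp [hρ₀, hFmin]
  have hexpdiff : ∀ a b : ℝ, Real.exp (-(a - b)) = Real.exp (-a) * Real.exp b := by
    intro a b; rw [← Real.exp_add]; ring_nf
  -- identity for the formula
  have hform : ∀ z ∈ Icc zmin zmax,
      (∫ y in zmin..z, γ y * Real.exp (-(M z - M y))) = ρ₀ z := by
    intro z hzm
    have hsub : uIcc zmin z ⊆ Icc zmin zmax := by
      rw [uIcc_of_le hzm.1]
      exact Icc_subset_Icc le_rfl hzm.2
    have h1 : EqOn (fun y => γ y * Real.exp (-(M z - M y)))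
        (fun y => Real.exp (-M z) * g y) (uIcc zmin z) := by
      intro y hy
      simp only [hg]
      rw [← hγteq y (hsub hy), hexpdiff]
      ring
    rw [intervalIntegral.integral_congr h1, intervalIntegral.integral_const_mul]
  have hωc : Continuous ω :=
    continuous_iff_continuousAt.2 fun z => (hω z).continuousAt
  ext ρ
  simp only [Set.mem_setOf_eq]
  constructor
  · rintro ⟨hpos, h0, hstar, hs0, hsform, hode⟩
    refine ⟨hstar, hs0, ?_⟩
    intro z hzm
    show ρ z = hstar * ∫ y in zmin..z, γ y * Real.exp (-(M z - M y))
    rw [hform z hzm]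
    -- uniqueness: D = e * ρ - hstar * F has zero derivative within Icc
    have hDd : ∀ x ∈ Icc zmin zmax,
        HasDerivWithinAt (fun z => e z * ρ z - hstar * F z) 0 (Icc zmin zmax) x := by
      intro x hx
      have h1 := ((heD x).hasDerivWithinAt.mul (hode x hx)).sub
        (((hFD x).const_mul hstar).hasDerivWithinAt)
      refine h1.congr_deriv ?_
      symm
      simp only [hg]
      rw [hγteq x hx]
      ring
    have hDzero : e z * ρ z - hstar * F z = 0 := by
      have hb := (convex_Icc zmin zmax).norm_image_sub_le_of_norm_hasDerivWithin_le
        (f' := fun _ => (0 : ℝ)) (C := 0) hDd (fun x _ => by simp)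
        (left_mem_Icc.2 hle) hzm
      rw [h0, hFmin] at hb
      simp only [mul_zero, sub_zero, zero_mul, norm_le_zero_iff] at hb
      simpa using hb
    have h2 : e z * ρ z = hstar * F z := by linarith
    have h3 : ρ z = Real.exp (-M z) * (e z * ρ z) := by
      rw [← mul_assoc, hee z, one_mul]
    rw [h3, h2, hρ₀]
    ring
  · rintro ⟨C, hC0, hEq⟩
    have hρval : ∀ z ∈ Icc zmin zmax, ρ z = C * ρ₀ z := by
      intro z hzm
      have := hEq hzm
      simp only at this
      rw [this, hform z hzm]
    have hzminmem : zmin ∈ Icc zmin zmax := left_mem_Icc.2 hle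
    have hzmaxmem : zmax ∈ Icc zmin zmax := right_mem_Icc.2 hle
    have h0 : ρ zmin = 0 := by rw [hρval zmin hzminmem, hρ₀min]; ring
    have hρc : ContinuousOn ρ (Icc zmin zmax) :=
      (continuous_const.mul hρ₀c).continuousOn.congr fun x hx => hρval x hx
    refine ⟨?_, h0, C, hC0, ?_, ?_⟩
    · intro z hzm
      rw [hρval z hzm]
      have hFz : 0 ≤ F z :=
        intervalIntegral.integral_nonneg hzm.1 fun u _ => hg0 u
      exact mul_nonneg hC0 (mul_nonneg (Real.exp_nonneg _) hFz)
    · -- budget formula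
      rw [eq_div_iff hωγ.ne']
      -- FTC on P = ω * (C * ρ₀)
      have hPD : ∀ x, HasDerivAt (fun z => ω z * (C * ρ₀ z))
          (ω' x * (C * ρ₀ x) + ω x * (C * (-μ x * ρ₀ x + γt x))) x := fun x =>
        (hω x).mul ((hρ₀D x).const_mul C)
      have hintg : IntervalIntegrable
          (fun x => ω' x * (C * ρ₀ x) + ω x * (C * (-μ x * ρ₀ x + γt x)))
          volume zmin zmax := by
        apply ContinuousOn.intervalIntegrable
        rw [uIcc_of_le hle]
        exact ((hω'c.mul (continuous_const.mul hρ₀c)).continuousOn).add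
          (hωc.continuousOn.mul (continuousOn_const.mul
            (((hμc.neg.mul hρ₀c.continuousOn).add hγtc.continuousOn))))
      have hint := intervalIntegral.integral_eq_sub_of_hasDerivAt
        (fun x _ => hPD x) hintg
      -- rewrite the integrand on the interval
      have hcongr : EqOn (fun x => ω' x * (C * ρ₀ x) + ω x * (C * (-μ x * ρ₀ x + γt x)))
          (fun x => ρ x * ω' x + (-(ω x * μ x * ρ x) + C * (ω x * γ x)))
          (uIcc zmin zmax) := by
        intro x hx
        rw [uIcc_of_le hle] at hx
        simp only
        rw [hγteq x hx, hρval x hx]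
        ring
      rw [intervalIntegral.integral_congr hcongr] at hint
      have hI1 : IntervalIntegrable (fun x => ρ x * ω' x) volume zmin zmax := by
        apply ContinuousOn.intervalIntegrable
        rw [uIcc_of_le hle]
        exact hρc.mul hω'c.continuousOn
      have hI2 : IntervalIntegrable (fun x => -(ω x * μ x * ρ x)) volume zmin zmax := by
        apply ContinuousOn.intervalIntegrable
        rw [uIcc_of_le hle]
        exact ((hωc.continuousOn.mul hμc).mul hρc).neg
      have hI3 : IntervalIntegrable (fun x => C * (ω x * γ x)) volume zmin zmax := by
        apply ContinuousOn.intervalIntegrable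
        rw [uIcc_of_le hle]
        exact continuousOn_const.mul (hωc.continuousOn.mul hγc)
      rw [intervalIntegral.integral_add hI1 (hI2.add hI3),
        intervalIntegral.integral_add hI2 hI3,
        intervalIntegral.integral_neg, intervalIntegral.integral_const_mul] at hint
      rw [← hρval zmax hzmaxmem, ← hρval zmin hzminmem, h0] at hint
      linarith
    · intro z hzm
      have hD : HasDerivWithinAt (fun z => C * ρ₀ z) (C * (-μ z * ρ₀ z + γt z))
          (Icc zmin zmax) z := ((hρ₀D z).const_mul C).hasDerivWithinAt
      have hD2 := hD.congr (fun x hx => hρval x hx) (hρval z hzm)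
      refine hD2.congr_deriv ?_
      symm
      rw [hγteq z hzm, hρval z hzm]
      ring
end
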